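/- arXiv:0801.4402 — 2 statements merged into one kernel-verified Lean document; each statement's English description precedes it below -/
import Mathlib

section
/- Under the conditions of the symmetric symplectic quaternion representation, the expansion of XᵀJ₄X is (a² − p·p + q·q − r·r) M_{1⊗j} + M_{(2 r×p − 2aq)⊗1} + (2 p·q) M_{1⊗i} + (2 r·q) M_{1⊗k}, where X = a M_{1⊗1} + M_{p⊗i} + M_{q⊗j} + M_{r⊗k}. -/
open Matrix Quaternion

noncomputable def quatBasis : Module.Basis (Fin 4) ℝ (Quaternion ℝ) :=
  Module.Basis.ofEquivFun (QuaternionAlgebra.linearEquivTuple (-1 : ℝ) (0 : ℝ) (-1 : ℝ))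

/-- The 4×4 real matrix of the ℝ-linear map `x ↦ p * x * star q` on ℍ ≅ ℝ⁴. -/
noncomputable def quatM (p q : Quaternion ℝ) : Matrix (Fin 4) (Fin 4) ℝ :=
  LinearMap.toMatrix quatBasis quatBasis
    ((LinearMap.mulLeft ℝ p).comp (LinearMap.mulRight ℝ (star q)))

def qi : Quaternion ℝ := ⟨0, 1, 0, 0⟩
def qj : Quaternion ℝ := ⟨0, 0, 1, 0⟩
def qk : Quaternion ℝ := ⟨0, 0, 0, 1⟩

/-- Dot product of the imaginary (vector) parts of two quaternions. -/
def qdot (x y : Quaternion ℝ) : ℝ := x.imI * y.imI + x.imJ * y.imJ + x.imK * y.imK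

/-- Cross product of the imaginary (vector) parts, as a pure quaternion. -/
def qcross (x y : Quaternion ℝ) : Quaternion ℝ :=
  ⟨0, x.imJ * y.imK - x.imK * y.imJ, x.imK * y.imI - x.imI * y.imK,
    x.imI * y.imJ - x.imJ * y.imI⟩

lemma quatBasis_apply (j : Fin 4) :
    quatBasis j = (⟨(Pi.single j 1 : Fin 4 → ℝ) 0, (Pi.single j 1 : Fin 4 → ℝ) 1,
      (Pi.single j 1 : Fin 4 → ℝ) 2, (Pi.single j 1 : Fin 4 → ℝ) 3⟩ : Quaternion ℝ) := by
  simp [quatBasis, Module.Basis.coe_ofEquivFun, QuaternionAlgebra.linearEquivTuple,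
    QuaternionAlgebra.equivTuple]
  erw [Module.Basis.coe_ofEquivFun]
  rfl

lemma quatM_apply (p q : Quaternion ℝ) (i j : Fin 4) :
    quatM p q i j = ![(p * quatBasis j * star q).re, (p * quatBasis j * star q).imI,
      (p * quatBasis j * star q).imJ, (p * quatBasis j * star q).imK] i := by
  rw [quatM, LinearMap.toMatrix_apply]
  show (QuaternionAlgebra.linearEquivTuple (-1:ℝ) (0:ℝ) (-1:ℝ)) _ i = _
  rw [QuaternionAlgebra.coe_linearEquivTuple]
  erw [QuaternionAlgebra.equivTuple_apply]
  simp [LinearMap.mulLeft, LinearMap.mulRight, mul_assoc]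

def Lmat (p : Quaternion ℝ) : Matrix (Fin 4) (Fin 4) ℝ :=
  !![p.re, -p.imI, -p.imJ, -p.imK;
     p.imI, p.re, -p.imK, p.imJ;
     p.imJ, p.imK, p.re, -p.imI;
     p.imK, -p.imJ, p.imI, p.re]

def Rmat (q : Quaternion ℝ) : Matrix (Fin 4) (Fin 4) ℝ :=
  !![q.re, q.imI, q.imJ, q.imK;
     -q.imI, q.re, -q.imK, q.imJ;
     -q.imJ, q.imK, q.re, -q.imI;
     -q.imK, -q.imJ, q.imI, q.re]

lemma quatM_eq (p q : Quaternion ℝ) : quatM p q = Lmat p * Rmat q := by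
  ext i j
  fin_cases i <;> fin_cases j <;>
  · rw [quatM_apply]
    simp only [Quaternion.re_mul, Quaternion.imI_mul, Quaternion.imJ_mul, Quaternion.imK_mul]
    rw [quatBasis_apply]
    simp [Lmat, Rmat, Matrix.mul_apply, Fin.sum_univ_four, Quaternion.re_mul, Quaternion.imI_mul, Quaternion.imJ_mul, Quaternion.imK_mul,
      Pi.single_apply]
    try ring

lemma quatM_one_right (p : Quaternion ℝ) : quatM p 1 = Lmat p := by
  rw [quatM_eq]
  have : Rmat 1 = 1 := by
    ext i j; fin_cases i <;> fin_cases j <;> simp [Rmat, Matrix.one_apply, Matrix.vecHead, Matrix.vecTail]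
  rw [this, mul_one]

lemma quatM_one_left (q : Quaternion ℝ) : quatM 1 q = Rmat q := by
  rw [quatM_eq]
  have : Lmat 1 = 1 := by
    ext i j; fin_cases i <;> fin_cases j <;> simp [Lmat, Matrix.one_apply, Matrix.vecHead, Matrix.vecTail]
  rw [this, one_mul]

set_option maxHeartbeats 2000000 in
theorem stmt_14 (a : ℝ) (p q r : Quaternion ℝ)
    (hp : p.re = 0) (hq : q.re = 0) (hr : r.re = 0)
    (X : Matrix (Fin 4) (Fin 4) ℝ)
    (hXdef : X = a • quatM 1 1 + quatM p qi + quatM q qj + quatM r qk) :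
    Xᵀ * quatM 1 qj * X =
      (a ^ 2 - qdot p p + qdot q q - qdot r r) • quatM 1 qj +
        quatM ((2 : ℝ) • qcross r p - (2 * a) • q) 1 +
        (2 * qdot p q) • quatM 1 qi + (2 * qdot r q) • quatM 1 qk := by
  have h1 : quatM 1 1 = (1 : Matrix (Fin 4) (Fin 4) ℝ) := by
    rw [quatM_one_left]
    ext i j; fin_cases i <;> fin_cases j <;> simp [Rmat, Matrix.one_apply, Matrix.vecHead, Matrix.vecTail]
  rw [hXdef, h1, quatM_one_left, quatM_one_left, quatM_one_left, quatM_one_right,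
    quatM_eq p qi, quatM_eq q qj, quatM_eq r qk]
  ext i j
  fin_cases i <;> fin_cases j <;>
  · simp only [Lmat, Quaternion.re_sub, Quaternion.imI_sub, Quaternion.imJ_sub, Quaternion.imK_sub,
      Quaternion.re_smul, Quaternion.imI_smul, Quaternion.imJ_smul, Quaternion.imK_smul]
    simp only [Matrix.mul_apply, Fin.sum_univ_four, Matrix.transpose_apply, Matrix.add_apply,
      Matrix.smul_apply, Matrix.sub_apply, Matrix.one_apply, Lmat, Rmat, qi, qj, qk, qdot, qcross,
      QuaternionAlgebra.re_sub, QuaternionAlgebra.imI_sub, QuaternionAlgebra.imJ_sub,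
      QuaternionAlgebra.imK_sub, QuaternionAlgebra.re_smul, QuaternionAlgebra.imI_smul,
      QuaternionAlgebra.imJ_smul, QuaternionAlgebra.imK_smul,
      hp, hq, hr, smul_eq_mul, Matrix.vecHead, Matrix.vecTail,
      Matrix.cons_val', Matrix.cons_val_zero, Matrix.cons_val_one, Matrix.head_cons,
      Matrix.empty_val', Matrix.cons_val_fin_one, Matrix.head_fin_const,
      Matrix.of_apply, Fin.isValue, Matrix.cons_val_two, Matrix.tail_cons, Matrix.cons_val_three]
    simp [hp, hq, hr, Matrix.vecHead, Matrix.vecTail]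
    try ring
end

section
/- Let X = a M_{1⊗1} + M_{p⊗i} + M_{q⊗j} + M_{r⊗k} be a real symmetric symplectic 4×4 matrix (so a q = r×p, p·q = r·q = 0, a² − p·p + q·q − r·r = 1). Then the characteristic polynomial of X is x⁴ − 4a x³ + (4a² − 4 q·q + 2) x² − 4a x + 1. -/
open Matrix Quaternion

lemma quatBasis_repr (z : Quaternion ℝ) (i : Fin 4) :
    quatBasis.repr z i = ![z.re, z.imI, z.imJ, z.imK] i := rfl

lemma quatBasis_apply_s15 (i : Fin 4) :
    quatBasis i = ![1, ⟨0,1,0,0⟩, ⟨0,0,1,0⟩, ⟨0,0,0,1⟩] i := by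
  apply quatBasis.repr.injective
  ext k
  rw [Module.Basis.repr_self, quatBasis_repr]
  fin_cases i <;> fin_cases k <;> simp [Finsupp.single_apply]

lemma quatM_eq_s15 (x y : Quaternion ℝ) : quatM x y =
    !![x.re*y.re + x.imI*y.imI + x.imJ*y.imJ + x.imK*y.imK,
       x.re*y.imI - x.imI*y.re - x.imJ*y.imK + x.imK*y.imJ,
       x.re*y.imJ + x.imI*y.imK - x.imJ*y.re - x.imK*y.imI,
       x.re*y.imK - x.imI*y.imJ + x.imJ*y.imI - x.imK*y.re;
       -x.re*y.imI + x.imI*y.re - x.imJ*y.imK + x.imK*y.imJ,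
       x.re*y.re + x.imI*y.imI - x.imJ*y.imJ - x.imK*y.imK,
       -x.re*y.imK + x.imI*y.imJ + x.imJ*y.imI - x.imK*y.re,
       x.re*y.imJ + x.imI*y.imK + x.imJ*y.re + x.imK*y.imI;
       -x.re*y.imJ + x.imI*y.imK + x.imJ*y.re - x.imK*y.imI,
       x.re*y.imK + x.imI*y.imJ + x.imJ*y.imI + x.imK*y.re,
       x.re*y.re - x.imI*y.imI + x.imJ*y.imJ - x.imK*y.imK,
       -x.re*y.imI - x.imI*y.re + x.imJ*y.imK + x.imK*y.imJ;
       -x.re*y.imK - x.imI*y.imJ + x.imJ*y.imI + x.imK*y.re,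
       -x.re*y.imJ + x.imI*y.imK - x.imJ*y.re + x.imK*y.imI,
       x.re*y.imI + x.imI*y.re + x.imJ*y.imK + x.imK*y.imJ,
       x.re*y.re - x.imI*y.imI - x.imJ*y.imJ + x.imK*y.imK] := by
  ext i j
  rw [quatM, LinearMap.toMatrix_apply, LinearMap.comp_apply, LinearMap.mulLeft_apply,
    LinearMap.mulRight_apply, quatBasis_apply_s15, quatBasis_repr]
  fin_cases i <;> fin_cases j <;>
    simp only [Quaternion.re_mul, Quaternion.imI_mul, Quaternion.imJ_mul,
      Quaternion.imK_mul, Quaternion.re_star, Quaternion.imI_star, Quaternion.imJ_star,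
      Quaternion.imK_star] <;> simp <;> ring

lemma det_fin_four' {R : Type*} [CommRing R] (A : Matrix (Fin 4) (Fin 4) R) :
    A.det = A 0 0*A 1 1*A 2 2*A 3 3 - A 0 0*A 1 1*A 2 3*A 3 2 - A 0 0*A 1 2*A 2 1*A 3 3 + A 0 0*A 1 2*A 2 3*A 3 1 + A 0 0*A 1 3*A 2 1*A 3 2 - A 0 0*A 1 3*A 2 2*A 3 1 - A 0 1*A 1 0*A 2 2*A 3 3 + A 0 1*A 1 0*A 2 3*A 3 2 + A 0 1*A 1 2*A 2 0*A 3 3 - A 0 1*A 1 2*A 2 3*A 3 0 - A 0 1*A 1 3*A 2 0*A 3 2 + A 0 1*A 1 3*A 2 2*A 3 0 + A 0 2*A 1 0*A 2 1*A 3 3 - A 0 2*A 1 0*A 2 3*A 3 1 - A 0 2*A 1 1*A 2 0*A 3 3 + A 0 2*A 1 1*A 2 3*A 3 0 + A 0 2*A 1 3*A 2 0*A 3 1 - A 0 2*A 1 3*A 2 1*A 3 0 - A 0 3*A 1 0*A 2 1*A 3 2 + A 0 3*A 1 0*A 2 2*A 3 1 + A 0 3*A 1 1*A 2 0*A 3 2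 - A 0 3*A 1 1*A 2 2*A 3 0 - A 0 3*A 1 2*A 2 0*A 3 1 + A 0 3*A 1 2*A 2 1*A 3 0 := by
  have e1 : (Fin.succ 2 : Fin 4) = 3 := rfl
  have e2 : ((2 : Fin 4).succAbove (2 : Fin 3)) = 3 := rfl
  have e3 : ((1 : Fin 4).succAbove (2 : Fin 3)) = 3 := rfl
  have e4 : (Fin.castSucc (2 : Fin 3) : Fin 4) = 2 := rfl
  have e5 : ((3 : Fin 4).succAbove (2 : Fin 3)) = 2 := rfl
  rw [Matrix.det_succ_row_zero]
  simp [Fin.sum_univ_succ, Matrix.det_fin_three, e1, e2, e3, e4, e5]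
  ring

set_option maxHeartbeats 2000000 in
open Polynomial in
theorem stmt_15 (a : ℝ) (p q r : Quaternion ℝ)
    (hp : p.re = 0) (hq : q.re = 0) (hr : r.re = 0)
    (h1 : a • q = qcross r p) (h2 : qdot p q = 0) (h3 : qdot r q = 0)
    (h4 : a ^ 2 - qdot p p + qdot q q - qdot r r = 1)
    (X : Matrix (Fin 4) (Fin 4) ℝ)
    (hXdef : X = a • quatM 1 1 + quatM p qi + quatM q qj + quatM r qk) :
    X.charpoly = Polynomial.X ^ 4 - C (4 * a) * Polynomial.X ^ 3 +
      C (4 * a ^ 2 - 4 * qdot q q + 2) * Polynomial.X ^ 2 -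
      C (4 * a) * Polynomial.X + 1 := by
  have g1 : a * q.imI = r.imJ * p.imK - r.imK * p.imJ := by
    have := congrArg QuaternionAlgebra.imI h1; simpa [qcross] using this
  have g2 : a * q.imJ = r.imK * p.imI - r.imI * p.imK := by
    have := congrArg QuaternionAlgebra.imJ h1; simpa [qcross] using this
  have g3 : a * q.imK = r.imI * p.imJ - r.imJ * p.imI := by
    have := congrArg QuaternionAlgebra.imK h1; simpa [qcross] using this
  have g4 : p.imI * q.imI + p.imJ * q.imJ + p.imK * q.imK = 0 := h2
  have g5 : r.imI * q.imI + r.imJ * q.imJ + r.imK * q.imK = 0 := h3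
  have g6 : a ^ 2 - (p.imI * p.imI + p.imJ * p.imJ + p.imK * p.imK)
      + (q.imI * q.imI + q.imJ * q.imJ + q.imK * q.imK)
      - (r.imI * r.imI + r.imJ * r.imJ + r.imK * r.imK) = 1 := h4
  have hX : X =
      !![a + p.imI + q.imJ + r.imK, q.imK - r.imJ, -p.imK + r.imI, p.imJ - q.imI;
         q.imK - r.imJ, a + p.imI - q.imJ - r.imK, p.imJ + q.imI, p.imK + r.imI;
         -p.imK + r.imI, p.imJ + q.imI, a - p.imI + q.imJ - r.imK, q.imK + r.imJ;
         p.imJ - q.imI, p.imK + r.imI, q.imK + r.imJ, a - p.imI - q.imJ + r.imK] := by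
    rw [hXdef, quatM_eq_s15, quatM_eq_s15, quatM_eq_s15, quatM_eq_s15]
    ext i j
    fin_cases i <;> fin_cases j <;>
      simp [qi, qj, qk, hp, hq, hr] <;> ring
  have G1 := congrArg (fun t : ℝ => (C t : ℝ[X])) g1
  have G2 := congrArg (fun t : ℝ => (C t : ℝ[X])) g2
  have G3 := congrArg (fun t : ℝ => (C t : ℝ[X])) g3
  have G4 := congrArg (fun t : ℝ => (C t : ℝ[X])) g4
  have G5 := congrArg (fun t : ℝ => (C t : ℝ[X])) g5
  have G6 := congrArg (fun t : ℝ => (C t : ℝ[X])) g6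
  simp only [map_add, map_sub, _root_.map_mul, map_pow, _root_.map_one, C_0] at G1 G2 G3 G4 G5 G6
  rw [hX, Matrix.charpoly, det_fin_four']
  simp only [qdot, charmatrix_apply, Matrix.diagonal_apply, Fin.reduceEq, reduceIte, if_true,
    Matrix.cons_val', Matrix.cons_val_zero, Matrix.cons_val_one, Matrix.head_cons,
    Matrix.empty_val', Matrix.cons_val_fin_one, Matrix.head_fin_const,
    Matrix.cons_val_two, Matrix.tail_cons, Matrix.cons_val_three, Matrix.cons_val_four,
    Matrix.of_apply]
  simp only [map_add, map_sub, _root_.map_mul, map_pow, map_neg, _root_.map_one, map_ofNat]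
  linear_combination
    (2*Polynomial.X^2 - 4*C a*Polynomial.X +
      (C a^2 - (C p.imI^2 + C p.imJ^2 + C p.imK^2) + (C q.imI^2 + C q.imJ^2 + C q.imK^2)
        - (C r.imI^2 + C r.imJ^2 + C r.imK^2) + 1)) * G6
    + (8*C q.imI*Polynomial.X - 4*(C a*C q.imI - (C r.imJ*C p.imK - C r.imK*C p.imJ))) * G1
    + (8*C q.imJ*Polynomial.X - 4*(C a*C q.imJ - (C r.imK*C p.imI - C r.imI*C p.imK))) * G2
    + (8*C q.imK*Polynomial.X - 4*(C a*C q.imK - (C r.imI*C p.imJ - C r.imJ*C p.imI))) * G3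
    + 4*(C p.imI*C q.imI + C p.imJ*C q.imJ + C p.imK*C q.imK) * G4
    + 4*(C r.imI*C q.imI + C r.imJ*C q.imJ + C r.imK*C q.imK) * G5
end
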